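/- arXiv:1908.09256 — 2 statements merged into one kernel-verified Lean document; each statement's English description precedes it below -/
import Mathlib

section
/- The function F is twice differentiable on ℝ with second derivative F''(Q) = -∬_Ω k(x,s) Λ(x,s)² e^{-Q Λ(x,s)} d(s,x), and F''(Q) < 0 for every Q ∈ ℝ; in particular, F is strictly concave on ℝ. -/
open MeasureTheory Real Set Filter

/-- `Λ(x,s) = ∫_s^x θ(t) dt`. -/
noncomputable def Lam (θ : ℝ → ℝ) (x s : ℝ) : ℝ := ∫ t in s..x, θ t

/-- `w(x;Q) = Q e^{-γx} ∫₀^x e^{γs} θ(s) e^{-Q Λ(x,s)} ds`. -/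
noncomputable def w (γ : ℝ) (θ : ℝ → ℝ) (Q x : ℝ) : ℝ :=
  Q * Real.exp (-γ * x) * ∫ s in (0:ℝ)..x, Real.exp (γ * s) * θ s * Real.exp (-Q * Lam θ x s)
/-- The kernel `k(x,s) = (p(x)/N)·θ(s)·e^{-γ(x-s)}`. -/
noncomputable def kker (γ N : ℝ) (p θ : ℝ → ℝ) (x s : ℝ) : ℝ :=
  (p x / N) * θ s * Real.exp (-γ * (x - s))

/-- The triangle `Ω = {(x,s) : 0 ≤ s ≤ x ≤ A}` (first coordinate `x`, second `s`). -/
def Tri (A : ℝ) : Set (ℝ × ℝ) := {q | 0 ≤ q.2 ∧ q.2 ≤ q.1 ∧ q.1 ≤ A}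

/-- Basic reproductive number `R₀ = ∬_Ω k(x,s) d(s,x)`. -/
noncomputable def R0 (γ N A : ℝ) (p θ : ℝ → ℝ) : ℝ :=
  ∫ q in Tri A, kker γ N p θ q.1 q.2

/-- `F(Q) = 1 - ∬_Ω k(x,s) e^{-Q Λ(x,s)} d(s,x)`. -/
noncomputable def FF (γ N A : ℝ) (p θ : ℝ → ℝ) (Q : ℝ) : ℝ :=
  1 - ∫ q in Tri A, kker γ N p θ q.1 q.2 * Real.exp (-Q * Lam θ q.1 q.2)

/-- Iteration map `T(Q) = Q·(1 - F(Q))`. -/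
noncomputable def TT (γ N A : ℝ) (p θ : ℝ → ℝ) (Q : ℝ) : ℝ :=
  Q * (1 - FF γ N A p θ Q)

lemma Tri_isClosed (A : ℝ) : IsClosed (Tri A) := by
  have h1 : IsClosed {q : ℝ × ℝ | 0 ≤ q.2} := isClosed_le continuous_const continuous_snd
  have h2 : IsClosed {q : ℝ × ℝ | q.2 ≤ q.1} := isClosed_le continuous_snd continuous_fst
  have h3 : IsClosed {q : ℝ × ℝ | q.1 ≤ A} := isClosed_le continuous_fst continuous_const
  have : Tri A = {q : ℝ × ℝ | 0 ≤ q.2} ∩ ({q | q.2 ≤ q.1} ∩ {q | q.1 ≤ A}) := by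
    ext q; simp [Tri, and_assoc]
  rw [this]; exact h1.inter (h2.inter h3)

lemma Tri_isCompact {A : ℝ} (hA : 0 ≤ A) : IsCompact (Tri A) := by
  refine IsCompact.of_isClosed_subset (isCompact_Icc (a := ((0:ℝ),(0:ℝ))) (b := (A, A)))
    (Tri_isClosed A) ?_
  rintro ⟨x, s⟩ ⟨h1, h2, h3⟩
  exact ⟨⟨le_trans h1 h2, h1⟩, ⟨h3, le_trans h2 h3⟩⟩

lemma Tri_measurableSet (A : ℝ) : MeasurableSet (Tri A) := (Tri_isClosed A).measurableSet

/-- Differentiation under the integral sign over the triangle. -/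
lemma key_deriv {A : ℝ} (hA : 0 ≤ A) (g h : ℝ × ℝ → ℝ) (hg : Continuous g)
    (hh : Continuous h) (Q₀ : ℝ) :
    HasDerivAt (fun Q => ∫ q in Tri A, g q * Real.exp (-Q * h q))
      (-∫ q in Tri A, g q * h q * Real.exp (-Q₀ * h q)) Q₀ := by
  have hco := Tri_isCompact hA
  have hms := Tri_measurableSet A
  obtain ⟨Cg, hCg⟩ := hco.exists_bound_of_continuousOn hg.continuousOn
  obtain ⟨Ch, hCh⟩ := hco.exists_bound_of_continuousOn hh.continuousOn
  have hCh0 : 0 ≤ Ch := le_trans (norm_nonneg _) (hCh (0, 0) ⟨le_refl 0, le_refl 0, hA⟩)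
  set bound : ℝ × ℝ → ℝ := fun _ => Cg * Ch * Real.exp ((|Q₀| + 1) * Ch) with hbound
  have hF'cont : ∀ Q : ℝ, Continuous fun q : ℝ × ℝ => -(g q * h q * Real.exp (-Q * h q)) :=
    fun Q => ((hg.mul hh).mul ((continuous_const.mul hh).rexp)).neg
  have main := hasDerivAt_integral_of_dominated_loc_of_deriv_le
    (μ := volume.restrict (Tri A)) (s := Metric.ball Q₀ 1)
    (F := fun Q q => g q * Real.exp (-Q * h q))
    (F' := fun Q q => -(g q * h q * Real.exp (-Q * h q)))
    (bound := bound) (Metric.ball_mem_nhds Q₀ one_pos)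
    (Eventually.of_forall fun Q =>
      ((hg.mul ((continuous_const.mul hh).rexp)).aestronglyMeasurable))
    (((hg.mul ((continuous_const.mul hh).rexp)).continuousOn).integrableOn_compact hco)
    ((hF'cont Q₀).aestronglyMeasurable)
    ?_ ?_ ?_
  · have h2 := main.2
    rwa [integral_neg] at h2
  · -- bound
    rw [ae_restrict_iff' hms]
    refine Eventually.of_forall fun q hq => fun Q hQ => ?_
    have hgq := hCg q hq
    have hhq := hCh q hq
    have hQabs : |Q| ≤ |Q₀| + 1 := by
      have := abs_sub_abs_le_abs_sub Q Q₀
      have hd : |Q - Q₀| < 1 := by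
        simpa [Real.dist_eq] using Metric.mem_ball.1 hQ
      linarith
    have hexp : Real.exp (-Q * h q) ≤ Real.exp ((|Q₀| + 1) * Ch) := by
      apply Real.exp_le_exp.2
      calc -Q * h q ≤ |(-Q) * h q| := le_abs_self _
        _ = |Q| * |h q| := by rw [abs_mul, abs_neg]
        _ ≤ (|Q₀| + 1) * Ch := by
            apply mul_le_mul hQabs ?_ (abs_nonneg _) (by positivity)
            simpa using hhq
    calc ‖-(g q * h q * Real.exp (-Q * h q))‖
        = |g q| * |h q| * Real.exp (-Q * h q) := by
          rw [norm_neg, norm_mul, norm_mul]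
          simp [Real.norm_eq_abs, abs_of_pos (Real.exp_pos _)]
      _ ≤ Cg * Ch * Real.exp ((|Q₀| + 1) * Ch) := by
          have hCg0 : 0 ≤ Cg := le_trans (norm_nonneg _) hgq
          apply mul_le_mul _ hexp (Real.exp_pos _).le (mul_nonneg hCg0 hCh0)
          apply mul_le_mul (by simpa using hgq) (by simpa using hhq) (abs_nonneg _) hCg0
  · -- integrable bound
    exact integrableOn_const hco.measure_lt_top.ne
  · -- differentiability
    refine Eventually.of_forall fun q => fun Q _ => ?_
    have h1 : HasDerivAt (fun Q : ℝ => -Q * h q) (-h q) Q := by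
      simpa using ((hasDerivAt_id Q).neg.mul_const (h q))
    have h2 := h1.exp
    have h3 := h2.const_mul (g q)
    refine h3.congr_deriv ?_
    ring

/-- `F` is twice differentiable with
`F''(Q) = -∬_Ω k Λ² e^{-QΛ} < 0`; in particular `F` is strictly concave on `ℝ`. -/
theorem F_second_deriv (γ A N : ℝ) (hγ : 0 < γ) (hA : 0 < A) (hN : 0 < N)
    (θ p : ℝ → ℝ)
    (hθc : ContinuousOn θ (Set.Icc 0 A)) (hθpos : ∀ x ∈ Set.Icc 0 A, 0 < θ x)
    (hpc : ContinuousOn p (Set.Icc 0 A)) (hppos : ∀ x ∈ Set.Icc 0 A, 0 < p x)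
    (hnorm : (1/N) * ∫ x in (0:ℝ)..A, p x = 1) :
    (∀ Q : ℝ, HasDerivAt (deriv (FF γ N A p θ))
      (-(∫ q in Tri A, kker γ N p θ q.1 q.2 * (Lam θ q.1 q.2)^2 *
        Real.exp (-Q * Lam θ q.1 q.2))) Q) ∧
    (∀ Q : ℝ, -(∫ q in Tri A, kker γ N p θ q.1 q.2 * (Lam θ q.1 q.2)^2 *
        Real.exp (-Q * Lam θ q.1 q.2)) < 0) ∧
    StrictConcaveOn ℝ Set.univ (FF γ N A p θ) := by
  have hms := Tri_measurableSet A
  have hco := Tri_isCompact hA.le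
  -- continuous extensions
  set r : ℝ → ℝ := fun t => max 0 (min t A) with hr
  have hrc : Continuous r := continuous_const.max (continuous_id.min continuous_const)
  have hrmem : ∀ t, r t ∈ Set.Icc 0 A :=
    fun t => ⟨le_max_left _ _, max_le hA.le (min_le_right t A)⟩
  have hreq : ∀ t ∈ Set.Icc 0 A, r t = t := by
    intro t ht
    simp [hr, min_eq_left ht.2, max_eq_right ht.1]
  set θt : ℝ → ℝ := fun t => θ (r t) with hθt
  set pt : ℝ → ℝ := fun t => p (r t) with hpt
  have hθtc : Continuous θt := hθc.comp_continuous hrc hrmem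
  have hptc : Continuous pt := hpc.comp_continuous hrc hrmem
  have hθteq : ∀ t ∈ Set.Icc 0 A, θt t = θ t := fun t ht => by rw [hθt]; simp [hreq t ht]
  have hpteq : ∀ t ∈ Set.Icc 0 A, pt t = p t := fun t ht => by rw [hpt]; simp [hreq t ht]
  have hθtpos : ∀ t, 0 < θt t := fun t => hθpos _ (hrmem t)
  have hptpos : ∀ t, 0 < pt t := fun t => hppos _ (hrmem t)
  -- extended Λ and k
  set Pθ : ℝ → ℝ := fun x => ∫ t in (0:ℝ)..x, θt t with hPθ
  have hPθc : Continuous Pθ :=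
    intervalIntegral.continuous_primitive (fun a b => hθtc.intervalIntegrable a b) 0
  set L : ℝ × ℝ → ℝ := fun q => Pθ q.1 - Pθ q.2 with hL
  have hLc : Continuous L := (hPθc.comp continuous_fst).sub (hPθc.comp continuous_snd)
  have hLint : ∀ x s : ℝ, L (x, s) = ∫ t in s..x, θt t := by
    intro x s
    rw [hL]
    exact intervalIntegral.integral_interval_sub_left
      (hθtc.intervalIntegrable 0 x) (hθtc.intervalIntegrable 0 s)
  set K : ℝ × ℝ → ℝ := fun q => (pt q.1 / N) * θt q.2 * Real.exp (-γ * (q.1 - q.2)) with hK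
  have hKc : Continuous K :=
    (((hptc.comp continuous_fst).div_const N).mul (hθtc.comp continuous_snd)).mul
      ((continuous_const.mul (continuous_fst.sub continuous_snd)).rexp)
  have hKpos : ∀ q, 0 < K q := fun q => by
    have := hptpos q.1; have := hθtpos q.2
    have := Real.exp_pos (-γ * (q.1 - q.2))
    positivity
  -- membership facts
  have hmem1 : ∀ q ∈ Tri A, q.1 ∈ Set.Icc 0 A := fun q hq => ⟨le_trans hq.1 hq.2.1, hq.2.2⟩
  have hmem2 : ∀ q ∈ Tri A, q.2 ∈ Set.Icc 0 A := fun q hq => ⟨hq.1, le_trans hq.2.1 hq.2.2⟩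
  -- equality of Λ and k on the triangle
  have hLeq : ∀ q ∈ Tri A, Lam θ q.1 q.2 = L q := by
    intro q hq
    rw [hLint q.1 q.2]
    unfold Lam
    apply intervalIntegral.integral_congr
    intro t ht
    rw [Set.uIcc_of_le hq.2.1] at ht
    exact (hθteq t ⟨le_trans hq.1 ht.1, le_trans ht.2 hq.2.2⟩).symm
  have hKeq : ∀ q ∈ Tri A, kker γ N p θ q.1 q.2 = K q := by
    intro q hq
    unfold kker
    simp only [hK]
    rw [hpteq q.1 (hmem1 q hq), hθteq q.2 (hmem2 q hq)]
  -- rewrite FF in terms of K and L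
  have hFFeq : FF γ N A p θ = fun Q => 1 - ∫ q in Tri A, K q * Real.exp (-Q * L q) := by
    funext Q
    unfold FF
    congr 1
    apply setIntegral_congr_fun hms
    intro q hq
    dsimp only
    rw [hKeq q hq, hLeq q hq]
  have hG2eq : ∀ Q : ℝ, (∫ q in Tri A, kker γ N p θ q.1 q.2 * (Lam θ q.1 q.2)^2 *
      Real.exp (-Q * Lam θ q.1 q.2)) = ∫ q in Tri A, K q * (L q)^2 * Real.exp (-Q * L q) := by
    intro Q
    apply setIntegral_congr_fun hms
    intro q hq
    dsimp only
    rw [hKeq q hq, hLeq q hq]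
  -- first derivative
  have hd1 : ∀ Q : ℝ, HasDerivAt (FF γ N A p θ)
      (∫ q in Tri A, K q * L q * Real.exp (-Q * L q)) Q := by
    intro Q
    rw [hFFeq]
    have := (key_deriv hA.le K L hKc hLc Q).const_sub 1
    simpa using this
  have hderiv1 : deriv (FF γ N A p θ) =
      fun Q => ∫ q in Tri A, K q * L q * Real.exp (-Q * L q) := by
    funext Q; exact (hd1 Q).deriv
  -- second derivative
  have hd2 : ∀ Q : ℝ, HasDerivAt (deriv (FF γ N A p θ))
      (-∫ q in Tri A, K q * (L q)^2 * Real.exp (-Q * L q)) Q := by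
    intro Q
    rw [hderiv1]
    have := key_deriv hA.le (fun q => K q * L q) L (hKc.mul hLc) hLc Q
    have heq : (fun q : ℝ × ℝ => K q * L q * L q * Real.exp (-Q * L q)) =
        fun q => K q * (L q)^2 * Real.exp (-Q * L q) := by
      funext q; ring
    rwa [heq] at this
  have part1 : ∀ Q : ℝ, HasDerivAt (deriv (FF γ N A p θ))
      (-(∫ q in Tri A, kker γ N p θ q.1 q.2 * (Lam θ q.1 q.2)^2 *
        Real.exp (-Q * Lam θ q.1 q.2))) Q := by
    intro Q
    rw [hG2eq Q]
    exact hd2 Q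
  -- positivity of the second-derivative integral
  have part2pos : ∀ Q : ℝ, 0 < ∫ q in Tri A, K q * (L q)^2 * Real.exp (-Q * L q) := by
    intro Q
    set f : ℝ × ℝ → ℝ := fun q => K q * (L q)^2 * Real.exp (-Q * L q) with hf
    have hfc : Continuous f := (hKc.mul (hLc.pow 2)).mul ((continuous_const.mul hLc).rexp)
    have hnn : 0 ≤ᵐ[volume.restrict (Tri A)] f := by
      refine Eventually.of_forall fun q => ?_
      have := hKpos q
      have := Real.exp_pos (-Q * L q)
      positivity
    have hint : IntegrableOn f (Tri A) := hfc.continuousOn.integrableOn_compact hco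
    -- the open sub-triangle
    set U : Set (ℝ × ℝ) := {q | 0 < q.2 ∧ q.2 < q.1 ∧ q.1 < A} with hU
    have hUopen : IsOpen U := by
      have h1 : IsOpen {q : ℝ × ℝ | 0 < q.2} := isOpen_lt continuous_const continuous_snd
      have h2 : IsOpen {q : ℝ × ℝ | q.2 < q.1} := isOpen_lt continuous_snd continuous_fst
      have h3 : IsOpen {q : ℝ × ℝ | q.1 < A} := isOpen_lt continuous_fst continuous_const
      have : U = {q : ℝ × ℝ | 0 < q.2} ∩ ({q | q.2 < q.1} ∩ {q | q.1 < A}) := by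
        ext q; simp [hU, and_assoc]
      rw [this]; exact h1.inter (h2.inter h3)
    have hUne : U.Nonempty := by
      refine ⟨(2*A/3, A/3), ?_, ?_, ?_⟩ <;> simp <;> linarith
    have hUsub : U ⊆ Function.support f ∩ Tri A := by
      rintro ⟨x, s⟩ ⟨h1, h2, h3⟩
      have hLpos : 0 < L (x, s) := by
        rw [hLint x s]
        exact intervalIntegral.intervalIntegral_pos_of_pos_on
          (hθtc.intervalIntegrable s x) (fun t _ => hθtpos t) h2
      constructor
      · have hfpos : 0 < f (x, s) := by
          have := hKpos (x, s)
          have := Real.exp_pos (-Q * L (x, s))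
          positivity
        exact Function.mem_support.2 hfpos.ne'
      · exact ⟨h1.le, h2.le, h3.le⟩
    have hμU : 0 < volume (Function.support f ∩ Tri A) :=
      lt_of_lt_of_le (hUopen.measure_pos volume hUne) (measure_mono hUsub)
    exact (setIntegral_pos_iff_support_of_nonneg_ae hnn hint).2 hμU
  have part2 : ∀ Q : ℝ, -(∫ q in Tri A, kker γ N p θ q.1 q.2 * (Lam θ q.1 q.2)^2 *
      Real.exp (-Q * Lam θ q.1 q.2)) < 0 := by
    intro Q
    rw [hG2eq Q]
    exact neg_lt_zero.2 (part2pos Q)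
  refine ⟨part1, part2, ?_⟩
  -- strict concavity
  apply strictConcaveOn_univ_of_deriv2_neg
  · have hdiff : Differentiable ℝ (FF γ N A p θ) := fun Q => (hd1 Q).differentiableAt
    exact hdiff.continuous
  · intro x
    have : deriv^[2] (FF γ N A p θ) x = deriv (deriv (FF γ N A p θ)) x := by
      simp [Function.iterate_succ, Function.iterate_zero]
    rw [this, (hd2 x).deriv]
    exact neg_lt_zero.2 (part2pos x)
end

section
/- Suppose R₀ < 2e and Q* ∈ (0,1) satisfies F(Q*) = 0. Then the derivative of the iteration map T at Q* satisfies -1 < T'(Q*) < 1. -/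
open MeasureTheory Real Set Filter

lemma te_le_inv_e (t : ℝ) : t * Real.exp (-t) ≤ Real.exp (-1) := by
  have h : t ≤ Real.exp (t - 1) := by
    have := Real.add_one_le_exp (t - 1); linarith
  calc t * Real.exp (-t) ≤ Real.exp (t - 1) * Real.exp (-t) := by
        apply mul_le_mul_of_nonneg_right h (Real.exp_pos _).le
    _ = Real.exp (-1) := by rw [← Real.exp_add]; ring_nf

theorem T_deriv_abs_lt_one' (γ A N : ℝ) (hγ : 0 < γ) (hA : 0 < A) (hN : 0 < N)
    (θ p : ℝ → ℝ)
    (hθc : ContinuousOn θ (Set.Icc 0 A)) (hθpos : ∀ x ∈ Set.Icc 0 A, 0 < θ x)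
    (hpc : ContinuousOn p (Set.Icc 0 A)) (hppos : ∀ x ∈ Set.Icc 0 A, 0 < p x)
    (hnorm : (1/N) * ∫ x in (0:ℝ)..A, p x = 1)
    (hR0 : R0 γ N A p θ < 2 * Real.exp 1)
    (Qstar : ℝ) (hQmem : Qstar ∈ Set.Ioo (0:ℝ) 1) (hQroot : FF γ N A p θ Qstar = 0) :
    -1 < deriv (TT γ N A p θ) Qstar ∧ deriv (TT γ N A p θ) Qstar < 1 := by
  obtain ⟨hQ0, hQ1⟩ := hQmem
  set k : ℝ × ℝ → ℝ := fun q => kker γ N p θ q.1 q.2 with hkdef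
  set L : ℝ × ℝ → ℝ := fun q => Lam θ q.1 q.2 with hLdef
  -- basic facts about the triangle
  have hsub : Tri A ⊆ Set.Icc (0:ℝ) A ×ˢ Set.Icc (0:ℝ) A := by
    rintro q ⟨h0, h1, h2⟩
    exact ⟨⟨h0.trans h1, h2⟩, ⟨h0, h1.trans h2⟩⟩
  have hTclosed : IsClosed (Tri A) := by
    have : Tri A = {q : ℝ × ℝ | 0 ≤ q.2} ∩ ({q | q.2 ≤ q.1} ∩ {q | q.1 ≤ A}) := by
      ext q; exact ⟨fun h => ⟨h.1, h.2.1, h.2.2⟩, fun h => ⟨h.1, h.2.1, h.2.2⟩⟩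
    rw [this]
    exact (isClosed_le continuous_const continuous_snd).inter
      ((isClosed_le continuous_snd continuous_fst).inter
        (isClosed_le continuous_fst continuous_const))
  have hTcomp : IsCompact (Tri A) :=
    (isCompact_Icc.prod isCompact_Icc).of_isClosed_subset hTclosed hsub
  have hTm : MeasurableSet (Tri A) := hTclosed.measurableSet
  -- interval integrability of θ
  have hθii : ∀ a b : ℝ, a ∈ Set.Icc (0:ℝ) A → b ∈ Set.Icc (0:ℝ) A →
      IntervalIntegrable θ volume a b := fun a b ha hb =>
    (hθc.mono (Set.uIcc_subset_Icc ha hb)).intervalIntegrable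
  -- continuity of L on the triangle
  have hΦc : ContinuousOn (fun u => ∫ t in (0:ℝ)..u, θ t) (Set.Icc 0 A) := by
    have := intervalIntegral.continuousOn_primitive_interval
      (a := (0:ℝ)) (b := A) (f := θ) (μ := volume)
      (by rw [Set.uIcc_of_le hA.le]; exact hθc.integrableOn_compact isCompact_Icc)
    rwa [Set.uIcc_of_le hA.le] at this
  have hLeq : ∀ q ∈ Tri A,
      (∫ t in (0:ℝ)..q.1, θ t) - (∫ t in (0:ℝ)..q.2, θ t) = L q := by
    intro q hq
    exact intervalIntegral.integral_interval_sub_left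
      (hθii 0 q.1 (Set.left_mem_Icc.2 hA.le) (hsub hq).1)
      (hθii 0 q.2 (Set.left_mem_Icc.2 hA.le) (hsub hq).2)
  have hLc : ContinuousOn L (Tri A) := by
    apply ContinuousOn.congr
      (f := fun q : ℝ × ℝ => (∫ t in (0:ℝ)..q.1, θ t) - (∫ t in (0:ℝ)..q.2, θ t))
    · exact (hΦc.comp continuous_fst.continuousOn fun q hq => (hsub hq).1).sub
        (hΦc.comp continuous_snd.continuousOn fun q hq => (hsub hq).2)
    · intro q hq; exact (hLeq q hq).symm
  -- continuity of k on the triangle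
  have hkc : ContinuousOn k (Tri A) := by
    simp only [hkdef, kker]
    apply ContinuousOn.mul
    apply ContinuousOn.mul
    · exact (hpc.comp continuous_fst.continuousOn fun q hq => (hsub hq).1).div_const N
    · exact hθc.comp continuous_snd.continuousOn fun q hq => (hsub hq).2
    · exact (Real.continuous_exp.comp (by continuity)).continuousOn
  -- nonnegativity
  have hknn : ∀ q ∈ Tri A, 0 ≤ k q := by
    intro q hq
    have hx := (hsub hq).1; have hs := (hsub hq).2
    exact mul_nonneg (mul_nonneg (div_nonneg (hppos _ hx).le hN.le) (hθpos _ hs).le)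
      (Real.exp_pos _).le
  have hLnn : ∀ q ∈ Tri A, 0 ≤ L q := by
    rintro q hq
    obtain ⟨h0, h1, h2⟩ := hq
    apply intervalIntegral.integral_nonneg h1
    intro u hu
    exact (hθpos u ⟨h0.trans hu.1, hu.2.trans h2⟩).le
  -- the map G and its derivative at Qstar
  set G : ℝ → ℝ := fun Q => ∫ q in Tri A, k q * Real.exp (-Q * L q) with hGdef
  set I : ℝ := ∫ q in Tri A, k q * L q * Real.exp (-Qstar * L q) with hIdef
  -- bound for the derivative integrand
  obtain ⟨C, hC⟩ := hTcomp.exists_bound_of_continuousOn (hkc.mul hLc)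
  have hGder : HasDerivAt G (-I) Qstar := by
    have main := hasDerivAt_integral_of_dominated_loc_of_deriv_le
      (μ := volume.restrict (Tri A)) (x₀ := Qstar)
      (F := fun Q q => k q * Real.exp (-Q * L q))
      (F' := fun Q q => k q * (Real.exp (-Q * L q) * (-L q)))
      (bound := fun _ => C) (s := Metric.ball Qstar (Qstar / 2)) (Metric.ball_mem_nhds _ (by positivity))
      (Filter.Eventually.of_forall fun Q =>
        ((hkc.mul ((Real.continuous_exp.comp (continuous_const.mul continuous_id)).comp_continuousOn
          hLc)).aestronglyMeasurable hTm))
      ((hkc.mul ((Real.continuous_exp.comp (continuous_const.mul continuous_id)).comp_continuousOn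
          hLc)).integrableOn_compact hTcomp)
      ((hkc.mul (((Real.continuous_exp.comp (continuous_const.mul continuous_id)).comp_continuousOn
          hLc).mul hLc.neg)).aestronglyMeasurable hTm)
      (MeasureTheory.ae_restrict_of_forall_mem hTm ?_)
      (MeasureTheory.integrableOn_const hTcomp.measure_lt_top.ne)
      (MeasureTheory.ae_restrict_of_forall_mem hTm ?_)
    · rcases main with ⟨_, hder⟩
      have : (∫ q in Tri A, k q * (Real.exp (-Qstar * L q) * (-L q))) = -I := by
        rw [hIdef, ← MeasureTheory.integral_neg]
        apply MeasureTheory.integral_congr_ae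
        filter_upwards with q
        ring
      rwa [this] at hder
    · -- bound
      intro q hq Q hQ
      have hQpos : 0 < Q := by
        have := abs_lt.1 (by simpa [Real.dist_eq] using Metric.mem_ball.1 hQ)
        linarith [this.1]
      have he1 : Real.exp (-Q * L q) ≤ 1 := by
        apply Real.exp_le_one_iff.2
        have := hLnn q hq
        nlinarith
      have hnn : 0 ≤ k q * L q * Real.exp (-Q * L q) := by
        have := hknn q hq; have := hLnn q hq; positivity
      have heqn : k q * (Real.exp (-Q * L q) * (-L q))
          = -(k q * L q * Real.exp (-Q * L q)) := by ring
      show ‖k q * (Real.exp (-Q * L q) * (-L q))‖ ≤ C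
      rw [heqn, norm_neg, Real.norm_eq_abs, abs_of_nonneg hnn]
      calc k q * L q * Real.exp (-Q * L q) ≤ k q * L q * 1 := by
            apply mul_le_mul_of_nonneg_left he1
            exact mul_nonneg (hknn q hq) (hLnn q hq)
        _ = k q * L q := by ring
        _ ≤ C := (le_abs_self _).trans ((Real.norm_eq_abs _) ▸ hC q hq)
    · -- differentiability
      intro q _ Q _
      have h1 : HasDerivAt (fun Q : ℝ => -Q * L q) (-L q) Q := by
        simpa using ((hasDerivAt_id Q).neg.mul_const (L q))
      exact (h1.exp).const_mul (k q)
  -- G Qstar = 1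
  have hG1 : G Qstar = 1 := by
    have h := hQroot
    simp only [FF] at h
    simp only [hGdef, hkdef, hLdef]
    linarith
  -- derivative of TT
  have hTTeq : TT γ N A p θ = fun Q => Q * G Q := by
    funext Q; simp only [TT, FF, hGdef, hkdef, hLdef]; ring
  have hTTder : HasDerivAt (TT γ N A p θ) (1 * G Qstar + Qstar * (-I)) Qstar := by
    rw [hTTeq]
    exact (hasDerivAt_id Qstar).mul hGder
  have hderiv : deriv (TT γ N A p θ) Qstar = 1 - Qstar * I := by
    rw [hTTder.deriv, hG1]; ring
  -- integrability of the integrand of I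
  have hIint : IntegrableOn
      (fun q => k q * L q * Real.exp (-Qstar * L q)) (Tri A) volume :=
    ((hkc.mul hLc).mul ((Real.continuous_exp.comp
      (continuous_const.mul continuous_id)).comp_continuousOn hLc)).integrableOn_compact hTcomp
  have hInn : ∀ q ∈ Tri A, 0 ≤ k q * L q * Real.exp (-Qstar * L q) := by
    intro q hq
    have := hknn q hq; have := hLnn q hq
    positivity
  -- positivity of I
  have hkpos : ∀ q ∈ Tri A, 0 < k q := by
    intro q hq
    have hx := (hsub hq).1; have hs := (hsub hq).2
    exact mul_pos (mul_pos (div_pos (hppos _ hx) hN) (hθpos _ hs)) (Real.exp_pos _)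
  have hIpos : 0 < I := by
    rw [hIdef]
    rw [MeasureTheory.setIntegral_pos_iff_support_of_nonneg_ae
      (MeasureTheory.ae_restrict_of_forall_mem hTm hInn) hIint]
    have hBsub : Set.Ioo (A/2) A ×ˢ Set.Ioo (0:ℝ) (A/4) ⊆
        Function.support (fun q => k q * L q * Real.exp (-Qstar * L q)) ∩ Tri A := by
      rintro ⟨x, s⟩ ⟨hx, hs⟩
      have hmem : (x, s) ∈ Tri A := by
        refine ⟨hs.1.le, ?_, hx.2.le⟩
        have : s < A/4 := hs.2
        have : A/4 ≤ A/2 := by linarith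
        linarith [hx.1, hs.2]
      refine ⟨?_, hmem⟩
      have hLpos : 0 < L (x, s) := by
        apply intervalIntegral.intervalIntegral_pos_of_pos_on
          (hθii s x (hsub hmem).2 (hsub hmem).1)
        · intro u hu
          exact hθpos u ⟨hs.1.le.trans hu.1.le, hu.2.le.trans hx.2.le⟩
        · have : A/4 ≤ A/2 := by linarith
          linarith [hx.1, hs.2]
      have := hkpos _ hmem
      have : 0 < k (x, s) * L (x, s) * Real.exp (-Qstar * L (x, s)) := by positivity
      exact ne_of_gt this
    calc (0:ENNReal) < volume (Set.Ioo (A/2) A ×ˢ Set.Ioo (0:ℝ) (A/4)) := by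
          rw [MeasureTheory.Measure.volume_eq_prod, MeasureTheory.Measure.prod_prod,
            Real.volume_Ioo, Real.volume_Ioo]
          apply ENNReal.mul_pos <;>
            simp [ENNReal.ofReal_pos] <;> linarith
      _ ≤ _ := measure_mono hBsub
  -- upper bound: Qstar * I < 2
  have hupper : Qstar * I < 2 := by
    have heq : Qstar * I = ∫ q in Tri A, Qstar * (k q * L q * Real.exp (-Qstar * L q)) := by
      rw [hIdef, MeasureTheory.integral_const_mul]
    have hle : Qstar * I ≤ ∫ q in Tri A, k q * Real.exp (-1) := by
      rw [heq]
      apply MeasureTheory.setIntegral_mono_on (hIint.const_mul Qstar)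
        ((hkc.mul continuousOn_const).integrableOn_compact hTcomp) hTm
      intro q hq
      have h1 : Qstar * (k q * L q * Real.exp (-Qstar * L q))
          = k q * ((Qstar * L q) * Real.exp (-(Qstar * L q))) := by
        rw [neg_mul]; ring
      rw [h1]
      exact mul_le_mul_of_nonneg_left (te_le_inv_e (Qstar * L q)) (hknn q hq)
    have h2 : (∫ q in Tri A, k q * Real.exp (-1)) = R0 γ N A p θ * Real.exp (-1) := by
      rw [MeasureTheory.integral_mul_const]; rfl
    have h3 : R0 γ N A p θ * Real.exp (-1) < 2 := by
      have he : Real.exp (-1) = (Real.exp 1)⁻¹ := by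
        rw [Real.exp_neg]
      rw [he]
      have := mul_lt_mul_of_pos_right hR0 (inv_pos.2 (Real.exp_pos 1))
      rwa [mul_assoc, mul_inv_cancel₀ (Real.exp_pos 1).ne', mul_one] at this
    linarith
  have hQI : 0 < Qstar * I := mul_pos hQ0 hIpos
  rw [hderiv]
  constructor <;> linarith

/-- if `R₀ < 2e`, then `-1 < T'(Q*) < 1` at the non-trivial fixed point. -/
theorem T_deriv_abs_lt_one (γ A N : ℝ) (hγ : 0 < γ) (hA : 0 < A) (hN : 0 < N)
    (θ p : ℝ → ℝ)
    (hθc : ContinuousOn θ (Set.Icc 0 A)) (hθpos : ∀ x ∈ Set.Icc 0 A, 0 < θ x)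
    (hpc : ContinuousOn p (Set.Icc 0 A)) (hppos : ∀ x ∈ Set.Icc 0 A, 0 < p x)
    (hnorm : (1/N) * ∫ x in (0:ℝ)..A, p x = 1)
    (hR0 : R0 γ N A p θ < 2 * Real.exp 1)
    (Qstar : ℝ) (hQmem : Qstar ∈ Set.Ioo (0:ℝ) 1) (hQroot : FF γ N A p θ Qstar = 0) :
    -1 < deriv (TT γ N A p θ) Qstar ∧ deriv (TT γ N A p θ) Qstar < 1 :=
  T_deriv_abs_lt_one' γ A N hγ hA hN θ p hθc hθpos hpc hppos hnorm hR0 Qstar hQmem hQroot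
end
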